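/- (Large-viscosity global bound) Suppose 𝒜 : [0,∞) → [0,∞) is absolutely continuous, ∫₀^∞ 𝒜(t) dt ≤ M, and 𝒜 satisfies 𝒜'(t) + (μ − μ^{1/2}𝒜(t)) D(t) ≤ C' 𝒜(t) with D(t) ≥ 0 whenever it satisfies 𝒜(t) ≤ μ^{1/2} (more precisely, 𝒜'(t) ≤ C'𝒜(t) holds whenever 𝒜(t) ≤ μ^{1/2}). If μ^{1/2} ≥ 𝒜(0) + C'M + 4M + μ₀^{1/2}, then 𝒜(t) ≤ μ^{1/2} for all t ≥ 0. -/

import Mathlib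

open MeasureTheory

/-- Large-viscosity global bound: if `𝒜' ≤ C'𝒜` whenever `𝒜 ≤ √μ`,
`∫₀^∞ 𝒜 ≤ M`, and `√μ ≥ 𝒜(0) + C'M + 4M + √μ₀`, then `𝒜(t) ≤ √μ` for all `t ≥ 0`. -/
theorem large_viscosity_global_bound (μ μ₀ C' M : ℝ)
    (hμ₀ : 0 < μ₀) (hμ : μ₀ ≤ μ) (hC' : 0 < C') (hM : 0 ≤ M)
    (𝒜 𝒜' : ℝ → ℝ) (hpos : ∀ t, 0 ≤ 𝒜 t)
    (hderiv : ∀ t, 0 ≤ t → HasDerivAt 𝒜 (𝒜' t) t)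
    (hineq : ∀ t, 0 ≤ t → 𝒜 t ≤ Real.sqrt μ → 𝒜' t ≤ C' * 𝒜 t)
    (hint : IntegrableOn 𝒜 (Set.Ici (0:ℝ)))
    (hintM : (∫ t in Set.Ici (0:ℝ), 𝒜 t) ≤ M)
    (hlarge : 𝒜 0 + C' * M + 4 * M + Real.sqrt μ₀ ≤ Real.sqrt μ) :
    ∀ t, 0 ≤ t → 𝒜 t ≤ Real.sqrt μ := by
  by_contra h
  push_neg at h
  obtain ⟨t₀, ht₀, ht₀'⟩ := h
  have hsq₀ : 0 < Real.sqrt μ₀ := Real.sqrt_pos.mpr hμ₀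
  -- A0 strictly below √μ plus slack C'M
  have hA0 : 𝒜 0 + C' * M < Real.sqrt μ := by nlinarith [mul_nonneg hC'.le hM]
  have hcontA : ContinuousOn 𝒜 (Set.Ici 0) := fun t ht =>
    (hderiv t ht).continuousAt.continuousWithinAt
  set B : Set ℝ := Set.Ici (0:ℝ) ∩ 𝒜 ⁻¹' Set.Ici (Real.sqrt μ) with hBdef
  have hBne : t₀ ∈ B := ⟨ht₀, ht₀'.le⟩
  have hBclosed : IsClosed B :=
    hcontA.preimage_isClosed_of_isClosed isClosed_Ici isClosed_Ici
  have hbdd : BddBelow B := ⟨0, fun x hx => hx.1⟩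
  set T := sInf B with hTdef
  have hTB : T ∈ B := hBclosed.csInf_mem ⟨t₀, hBne⟩ hbdd
  have hT0 : 0 ≤ T := hTB.1
  have hTA : Real.sqrt μ ≤ 𝒜 T := hTB.2
  have hTpos : 0 < T := by
    rcases hT0.lt_or_eq with h | h
    · exact h
    · exfalso
      rw [← h] at hTA
      nlinarith [mul_nonneg hC'.le hM]
  -- below T, strictly below √μ
  have hlt : ∀ s, 0 ≤ s → s < T → 𝒜 s < Real.sqrt μ := by
    intro s hs0 hsT
    by_contra hc
    push_neg at hc
    exact absurd (csInf_le hbdd ⟨hs0, hc⟩) (not_le.mpr hsT)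
  -- the auxiliary function g
  set g : ℝ → ℝ := fun t => 𝒜 t - C' * ∫ s in (0:ℝ)..t, 𝒜 s with hgdef
  have hintIcc : IntegrableOn 𝒜 (Set.Icc 0 T) :=
    hint.mono_set (Set.Icc_subset_Ici_self)
  have hii : ∀ x : ℝ, 0 ≤ x → IntervalIntegrable 𝒜 volume 0 x := by
    intro x hx
    rw [intervalIntegrable_iff, Set.uIoc_of_le hx]
    exact hint.mono_set (Set.Ioc_subset_Icc_self.trans Set.Icc_subset_Ici_self)
  have hprimc : ContinuousOn (fun x => ∫ s in (0:ℝ)..x, 𝒜 s) (Set.Icc 0 T) := by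
    have := intervalIntegral.continuousOn_primitive_interval
      (a := (0:ℝ)) (b := T) (μ := volume) (f := 𝒜) (by rwa [Set.uIcc_of_le hT0])
    rwa [Set.uIcc_of_le hT0] at this
  have hgc : ContinuousOn g (Set.Icc 0 T) :=
    (hcontA.mono Set.Icc_subset_Ici_self).sub (continuousOn_const.mul hprimc)
  have hgd : ∀ x ∈ Set.Ioo (0:ℝ) T, HasDerivAt g (𝒜' x - C' * 𝒜 x) x := by
    intro x hx
    have hmem : Set.Ici (0:ℝ) ∈ nhds x := Ici_mem_nhds hx.1
    have hca : ContinuousAt 𝒜 x := (hcontA x hx.1.le).continuousAt hmem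
    have hprim : HasDerivAt (fun t => ∫ s in (0:ℝ)..t, 𝒜 s) (𝒜 x) x :=
      intervalIntegral.integral_hasDerivAt_right (hii x hx.1.le)
        (AEStronglyMeasurable.stronglyMeasurableAtFilter_of_mem
          hint.aestronglyMeasurable hmem) hca
    exact (hderiv x hx.1.le).sub (hprim.const_mul C')
  have hanti : AntitoneOn g (Set.Icc 0 T) := by
    apply antitoneOn_of_deriv_nonpos (convex_Icc 0 T) hgc
    · intro x hx
      rw [interior_Icc] at hx
      exact (hgd x hx).differentiableAt.differentiableWithinAt
    · intro x hx
      rw [interior_Icc] at hx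
      rw [(hgd x hx).deriv]
      have := hineq x hx.1.le (hlt x hx.1.le hx.2).le
      linarith
  have hg0 : g 0 = 𝒜 0 := by simp [hgdef]
  have hgT : g T ≤ g 0 :=
    hanti (Set.left_mem_Icc.mpr hT0) (Set.right_mem_Icc.mpr hT0) hT0
  have hintle : (∫ s in (0:ℝ)..T, 𝒜 s) ≤ M := by
    rw [intervalIntegral.integral_of_le hT0]
    refine le_trans ?_ hintM
    apply setIntegral_mono_set hint
    · exact Filter.Eventually.of_forall fun x => hpos x
    · exact Filter.Eventually.of_forall fun x hx => (Set.Ioc_subset_Icc_self.trans Set.Icc_subset_Ici_self) hx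
  have hCint : C' * (∫ s in (0:ℝ)..T, 𝒜 s) ≤ C' * M :=
    mul_le_mul_of_nonneg_left hintle hC'.le
  have : 𝒜 T ≤ 𝒜 0 + C' * M := by
    have := hgT
    rw [hg0] at this
    simp only [hgdef] at this
    linarith
  linarith
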